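/- arXiv:1905.09014 — 3 statements merged into one kernel-verified Lean document; each statement's English description precedes it below -/
import Mathlib

section
/- (Correctness of joining two valuation functions.) Let i ≠ j be two agents with valuation functions V_i, V_j and let m be a cap vector. Then max_{a ≤ m} (V_i ⊕ V_j)(a) = OPT({i, j}, m); that is, maximizing the joint valuation function over all allocation vectors bounded by m yields the optimal social welfare of the two agents under cap m. -/
/-- An allocation `A` for the agents in `G` is *valid* with cap `m` if the
element-wise sum of the allocated vectors does not exceed `m`. -/
def Valid (R : ℕ) {ι : Type*} (G : Finset ι) (m : Fin R → ℕ)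
    (A : ι → Fin R → ℕ) : Prop :=
  ∑ i ∈ G, A i ≤ m

/-- The social welfare of the allocation `A` on the agent set `G`. -/
def SW (R : ℕ) {ι : Type*} (V : ι → (Fin R → ℕ) → ℝ) (G : Finset ι)
    (A : ι → Fin R → ℕ) : ℝ :=
  ∑ i ∈ G, V i (A i)

/-- `OPT R V G m` : the maximal social welfare over all valid allocations
for the agents in `G` with cap `m`. -/
noncomputable def OPT (R : ℕ) {ι : Type*} (V : ι → (Fin R → ℕ) → ℝ)
    (G : Finset ι) (m : Fin R → ℕ) : ℝ :=
  sSup {w : ℝ | ∃ A : ι → Fin R → ℕ, Valid R G m A ∧ SW R V G A = w}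

/-- The joint valuation of `V` and `W`:
`(V ⊕ W)(a) = max_{b ≤ a} (V b + W (a - b))` (truncated subtraction). -/
noncomputable def join (R : ℕ) (V W : (Fin R → ℕ) → ℝ) : (Fin R → ℕ) → ℝ :=
  fun a => sSup {w : ℝ | ∃ b ≤ a, V b + W (a - b) = w}

/-- Correctness of joining two valuation functions: maximizing the joint
valuation `V_i ⊕ V_j` over all allocation vectors bounded by `m` yields
`OPT({i, j}, m)`. -/
theorem join_two_correct (R : ℕ) {ι : Type*} [DecidableEq ι]
    (V : ι → (Fin R → ℕ) → ℝ) (i j : ι) (hij : i ≠ j) (m : Fin R → ℕ) :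
    sSup {w : ℝ | ∃ a ≤ m, join R (V i) (V j) a = w} =
      OPT R V ({i, j} : Finset ι) m := by
  classical
  set S' : Set ℝ := {w | ∃ b c : Fin R → ℕ, b + c ≤ m ∧ V i b + V j c = w} with hS'
  have hfin : (Set.pi Set.univ (fun k => Set.Iic (m k)) : Set (Fin R → ℕ)).Finite :=
    Set.Finite.pi (fun k => Set.finite_Iic (m k))
  have hbig : BddAbove ((fun p : (Fin R → ℕ) × (Fin R → ℕ) => V i p.1 + V j p.2) ''
      ((Set.pi Set.univ fun k => Set.Iic (m k)) ×ˢ (Set.pi Set.univ fun k => Set.Iic (m k)))) :=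
    ((hfin.prod hfin).image _).bddAbove
  have hS'bdd : BddAbove S' := by
    refine BddAbove.mono ?_ hbig
    rintro w ⟨b, c, hbc, rfl⟩
    exact ⟨(b, c), ⟨fun k _ => le_trans (Nat.le_add_right _ _) (hbc k),
      fun k _ => le_trans (Nat.le_add_left _ _) (hbc k)⟩, rfl⟩
  have hS'ne : S'.Nonempty := ⟨V i 0 + V j 0, 0, 0, by simp [Pi.le_def], rfl⟩
  -- the inner sets of `join`
  have hJsub : ∀ a : Fin R → ℕ, a ≤ m →
      {w : ℝ | ∃ b ≤ a, V i b + V j (a - b) = w} ⊆ S' := by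
    rintro a ha w ⟨b, hb, rfl⟩
    refine ⟨b, a - b, ?_, rfl⟩
    intro k
    have : b k + (a k - b k) = a k := Nat.add_sub_cancel' (hb k)
    simpa [this] using ha k
  have hJne : ∀ a : Fin R → ℕ, {w : ℝ | ∃ b ≤ a, V i b + V j (a - b) = w}.Nonempty := by
    intro a
    exact ⟨V i 0 + V j (a - 0), 0, fun k => Nat.zero_le _, rfl⟩
  have hjoin_le : ∀ a : Fin R → ℕ, a ≤ m → join R (V i) (V j) a ≤ sSup S' := fun a ha =>
    csSup_le_csSup hS'bdd (hJne a) (hJsub a ha)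
  have hT : sSup {w : ℝ | ∃ a ≤ m, join R (V i) (V j) a = w} = sSup S' := by
    have hTbdd : BddAbove {w : ℝ | ∃ a ≤ m, join R (V i) (V j) a = w} := by
      refine ⟨sSup S', ?_⟩
      rintro w ⟨a, ha, rfl⟩
      exact hjoin_le a ha
    apply le_antisymm
    · refine csSup_le ⟨join R (V i) (V j) 0, 0, fun k => Nat.zero_le _, rfl⟩ ?_
      rintro w ⟨a, ha, rfl⟩
      exact hjoin_le a ha
    · refine csSup_le hS'ne ?_
      rintro w ⟨b, c, hbc, rfl⟩
      have hc : (b + c) - b = c := add_tsub_cancel_left b c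
      have hmem : V i b + V j c ∈ {w : ℝ | ∃ b' ≤ b + c, V i b' + V j ((b + c) - b') = w} :=
        ⟨b, fun k => Nat.le_add_right _ _, by rw [hc]⟩
      have h1 : V i b + V j c ≤ join R (V i) (V j) (b + c) :=
        le_csSup (BddAbove.mono (hJsub _ hbc) hS'bdd) hmem
      exact h1.trans (le_csSup hTbdd ⟨b + c, hbc, rfl⟩)
  rw [hT, OPT]
  congr 1
  ext w
  constructor
  · rintro ⟨b, c, hbc, rfl⟩
    refine ⟨fun k => if k = i then b else c, ?_, ?_⟩
    · unfold Valid
      rw [Finset.sum_pair hij]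
      simpa [hij.symm] using hbc
    · unfold SW
      rw [Finset.sum_pair hij]
      simp [hij.symm]
  · rintro ⟨A, hval, rfl⟩
    refine ⟨A i, A j, ?_, ?_⟩
    · have := hval
      unfold Valid at this
      rwa [Finset.sum_pair hij] at this
    · unfold SW
      rw [Finset.sum_pair hij]
end

section
/- (Correctness of the joint valuation algorithm.) Let agents 1, …, n (n ≥ 1) have valuation functions V_1, …, V_n and let m be a cap vector. Then max_{a ≤ m} (V_1 ⊕ V_2 ⊕ ⋯ ⊕ V_n)(a) = OPT({1, …, n}, m); i.e., the maximum of the iterated joint valuation function over allocation vectors bounded by m equals the maximal social welfare. -/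
/-- The iterated join `V₁ ⊕ V₂ ⊕ ⋯ ⊕ Vₙ` of a list of valuation functions
(the empty join is the zero function). -/
noncomputable def joinIter (R : ℕ) :
    List ((Fin R → ℕ) → ℝ) → ((Fin R → ℕ) → ℝ)
  | [] => fun _ => 0
  | V :: rest => rest.foldl (join R) V

lemma finite_Iic_pi {ι α : Type*} [Fintype ι] [Preorder α] (m : ι → α)
    (h : ∀ i, (Set.Iic (m i)).Finite) : (Set.Iic m).Finite := by
  apply Set.Finite.subset (Set.Finite.pi (fun i => h i))
  intro b hb i _
  exact hb i

lemma T1_finite {R : ℕ} (F : (Fin R → ℕ) → ℝ) (m : Fin R → ℕ) :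
    {w : ℝ | ∃ a ≤ m, F a = w}.Finite := by
  have h : {w : ℝ | ∃ a ≤ m, F a = w} = F '' Set.Iic m := by
    ext w; simp [Set.mem_image, Set.mem_Iic]
  rw [h]
  exact Set.Finite.image _ (finite_Iic_pi m (fun i => Set.finite_Iic _))

lemma T1_nonempty {R : ℕ} (F : (Fin R → ℕ) → ℝ) (m : Fin R → ℕ) :
    {w : ℝ | ∃ a ≤ m, F a = w}.Nonempty :=
  ⟨F 0, 0, fun i => Nat.zero_le _, rfl⟩

lemma pairs_finite {R : ℕ} (F W : (Fin R → ℕ) → ℝ) (m : Fin R → ℕ) :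
    {w : ℝ | ∃ b c, b + c ≤ m ∧ F b + W c = w}.Finite := by
  apply Set.Finite.subset (Set.Finite.image (fun p : (Fin R → ℕ) × (Fin R → ℕ) => F p.1 + W p.2)
    ((finite_Iic_pi m (fun i => Set.finite_Iic _)).prod (finite_Iic_pi m (fun i => Set.finite_Iic _))))
  rintro w ⟨b, c, h, rfl⟩
  exact ⟨(b, c), ⟨fun i => le_trans (Nat.le_add_right _ _) (h i),
    fun i => le_trans (Nat.le_add_left _ _) (h i)⟩, rfl⟩

lemma OPTset_finite {R n : ℕ} (V : Fin n → (Fin R → ℕ) → ℝ) (m : Fin R → ℕ) :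
    {w : ℝ | ∃ A : Fin n → Fin R → ℕ,
      Valid R Finset.univ m A ∧ SW R V Finset.univ A = w}.Finite := by
  apply Set.Finite.subset (Set.Finite.image (SW R V Finset.univ)
    (finite_Iic_pi (fun _ : Fin n => m)
      (fun _ => finite_Iic_pi m (fun i => Set.finite_Iic _))))
  rintro w ⟨A, hA, rfl⟩
  refine ⟨A, ?_, rfl⟩
  intro i
  calc A i ≤ ∑ j ∈ Finset.univ, A j :=
        Finset.single_le_sum (fun j _ => fun k => Nat.zero_le _) (Finset.mem_univ i)
    _ ≤ m := hA

lemma OPTset_nonempty {R n : ℕ} (V : Fin n → (Fin R → ℕ) → ℝ) (m : Fin R → ℕ) :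
    {w : ℝ | ∃ A : Fin n → Fin R → ℕ,
      Valid R Finset.univ m A ∧ SW R V Finset.univ A = w}.Nonempty := by
  refine ⟨SW R V Finset.univ 0, 0, ?_, rfl⟩
  simp only [Valid]
  intro i
  simp

lemma sup_join {R : ℕ} (F W : (Fin R → ℕ) → ℝ) (m : Fin R → ℕ) :
    sSup {w : ℝ | ∃ a ≤ m, join R F W a = w}
      = sSup {w : ℝ | ∃ b c, b + c ≤ m ∧ F b + W c = w} := by
  apply le_antisymm
  · apply csSup_le (T1_nonempty _ m)
    rintro w ⟨a, ha, rfl⟩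
    show sSup {w : ℝ | ∃ b ≤ a, F b + W (a - b) = w} ≤ _
    apply csSup_le (T1_nonempty _ a)
    rintro w ⟨b, hb, rfl⟩
    apply le_csSup (pairs_finite F W m).bddAbove
    refine ⟨b, a - b, ?_, rfl⟩
    have : b + (a - b) = a := funext fun i => Nat.add_sub_cancel' (hb i)
    rw [this]; exact ha
  · refine csSup_le ⟨F 0 + W 0, 0, 0, fun i => Nat.zero_le _, rfl⟩ ?_
    rintro w ⟨b, c, h, rfl⟩
    have hsub : (b + c) - b = c := funext fun i => Nat.add_sub_cancel_left (b i) (c i)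
    calc F b + W c = F b + W ((b + c) - b) := by rw [hsub]
      _ ≤ join R F W (b + c) := le_csSup (T1_finite _ (b + c)).bddAbove
          ⟨b, fun i => Nat.le_add_right _ _, rfl⟩
      _ ≤ _ := le_csSup (T1_finite _ m).bddAbove ⟨b + c, h, rfl⟩

lemma joinIter_concat {R : ℕ} (x : (Fin R → ℕ) → ℝ) (l : List ((Fin R → ℕ) → ℝ))
    (W : (Fin R → ℕ) → ℝ) :
    joinIter R ((x :: l).concat W) = join R (joinIter R (x :: l)) W := by
  simp [joinIter, List.concat_eq_append, List.foldl_append]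

/-- Correctness of the joint valuation algorithm: the maximum of the iterated
joint valuation `V₁ ⊕ ⋯ ⊕ Vₙ` over allocation vectors bounded by `m` equals
the maximal social welfare `OPT({1, …, n}, m)`. -/
theorem joinIter_correct (R n : ℕ) (hn : 1 ≤ n)
    (V : Fin n → (Fin R → ℕ) → ℝ) (m : Fin R → ℕ) :
    sSup {w : ℝ | ∃ a ≤ m, joinIter R (List.ofFn V) a = w} =
      OPT R V (Finset.univ : Finset (Fin n)) m := by
  induction n, hn using Nat.le_induction generalizing m with
  | base =>
    unfold OPT
    congr 1
    ext w
    constructor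
    · rintro ⟨a, ha, rfl⟩
      refine ⟨fun _ => a, ?_, ?_⟩
      · simpa [Valid] using ha
      · simp [SW, joinIter]
    · rintro ⟨A, hA, rfl⟩
      refine ⟨A 0, ?_, ?_⟩
      · simpa [Valid] using hA
      · simp [SW, joinIter]
  | succ n hn IH =>
    set W := V (Fin.last n) with hW
    set V' := fun i : Fin n => V i.castSucc with hV'
    set J := joinIter R (List.ofFn V') with hJdef
    have hJ : joinIter R (List.ofFn V) = join R J W := by
      rw [List.ofFn_succ']
      obtain ⟨k, rfl⟩ : ∃ k, n = k + 1 := ⟨n - 1, by omega⟩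
      rw [hJdef, hV', List.ofFn_succ]
      exact joinIter_concat _ _ _
    rw [hJ, sup_join]
    apply le_antisymm
    · refine csSup_le ⟨J 0 + W 0, 0, 0, fun i => Nat.zero_le _, rfl⟩ ?_
      rintro w ⟨b, c, hbc, rfl⟩
      -- each SW of a valid n-allocation with cap b, plus W c, is ≤ OPT
      have key : ∀ x ∈ {w : ℝ | ∃ A : Fin n → Fin R → ℕ,
          Valid R Finset.univ b A ∧ SW R V' Finset.univ A = w},
          x + W c ≤ OPT R V (Finset.univ : Finset (Fin (n+1))) m := by
        rintro x ⟨A', hA', rfl⟩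
        apply le_csSup (OPTset_finite V m).bddAbove
        refine ⟨Fin.snoc A' c, ?_, ?_⟩
        · show ∑ i ∈ Finset.univ, Fin.snoc A' c i ≤ m
          rw [Fin.sum_univ_castSucc]
          simp only [Fin.snoc_castSucc, Fin.snoc_last]
          intro i
          exact le_trans (Nat.add_le_add_right
            (by exact_mod_cast le_of_eq rfl : (∑ j ∈ Finset.univ, A' j) i ≤ _) _)
            (le_trans (Nat.add_le_add_right (hA' i) _) (hbc i))
        · simp only [SW]
          rw [Fin.sum_univ_castSucc]
          simp only [Fin.snoc_castSucc, Fin.snoc_last]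
          rfl
      have hJb : J b ≤ sSup {w : ℝ | ∃ a ≤ b, J a = w} :=
        le_csSup (T1_finite J b).bddAbove ⟨b, le_refl _, rfl⟩
      have hIH := IH V' b
      unfold OPT at hIH
      have h2 : sSup {w : ℝ | ∃ A : Fin n → Fin R → ℕ,
          Valid R Finset.univ b A ∧ SW R V' Finset.univ A = w}
            ≤ OPT R V (Finset.univ : Finset (Fin (n+1))) m - W c := by
        apply csSup_le (OPTset_nonempty V' b)
        intro x hx
        have := key x hx
        linarith
      rw [hIH] at hJb
      linarith
    · unfold OPT
      apply csSup_le (OPTset_nonempty V m)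
      rintro w ⟨A, hA, rfl⟩
      set A' := fun i : Fin n => A i.castSucc with hA'def
      set b := ∑ i ∈ Finset.univ, A' i with hbdef
      set c := A (Fin.last n) with hcdef
      have hbc : b + c ≤ m := by
        have : ∑ i ∈ Finset.univ, A i = b + c := by
          rw [hbdef, hcdef, Fin.sum_univ_castSucc]
        rw [← this]; exact hA
      have hSW : SW R V Finset.univ A = SW R V' Finset.univ A' + W c := by
        show ∑ i ∈ Finset.univ, V i (A i) = _
        rw [Fin.sum_univ_castSucc]
        rfl
      have h1 : SW R V' Finset.univ A' ≤ sSup {w : ℝ | ∃ a ≤ b, J a = w} := by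
        rw [IH V' b]
        exact le_csSup (OPTset_finite V' b).bddAbove ⟨A', le_refl _, rfl⟩
      have h2 : sSup {w : ℝ | ∃ a ≤ b, J a = w}
          ≤ sSup {w : ℝ | ∃ p q, p + q ≤ m ∧ J p + W q = w} - W c := by
        apply csSup_le (T1_nonempty J b)
        rintro x ⟨a, hab, rfl⟩
        have : J a + W c ≤ sSup {w : ℝ | ∃ p q, p + q ≤ m ∧ J p + W q = w} := by
          apply le_csSup (pairs_finite J W m).bddAbove
          exact ⟨a, c, le_trans (fun i => Nat.add_le_add_right (hab i) _) hbc, rfl⟩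
        linarith
      rw [hSW]
      linarith
end

section
/- (Correctness of the prefix–suffix payment computation.) Let agents 1, …, n have valuation functions V_1, …, V_n, let m be a cap vector, and fix j ∈ {1, …, n}. Let F be the join of the prefix V_1 ⊕ ⋯ ⊕ V_{j−1} and let B be the join of the suffix V_{j+1} ⊕ ⋯ ⊕ V_n (where an empty join is the zero function). Then max_{a ≤ m} (F ⊕ B)(a) = OPT({1, …, n} \ {j}, m), the maximal social welfare achievable when agent j is excluded from the auction. -/
namespace PSP

variable {R n : ℕ}

lemma le_finite (a : Fin R → ℕ) : {b : Fin R → ℕ | b ≤ a}.Finite := by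
  have h : {b : Fin R → ℕ | b ≤ a} ⊆ Set.pi Set.univ (fun i => Set.Iic (a i)) := by
    intro b hb i _
    exact hb i
  exact (Set.Finite.pi (fun i => Set.finite_Iic (a i))).subset h

lemma alloc_finite (m : Fin R → ℕ) :
    {A : Fin n → Fin R → ℕ | ∀ i, A i ≤ m}.Finite := by
  have h : {A : Fin n → Fin R → ℕ | ∀ i, A i ≤ m}
      ⊆ Set.pi Set.univ (fun _ => {b : Fin R → ℕ | b ≤ m}) := by
    intro A hA i _
    exact hA i
  exact (Set.Finite.pi (fun _ => le_finite m)).subset h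

/-- The set of social welfares of allocations with exact sum `x` over `G`. -/
def Pex (V : Fin n → (Fin R → ℕ) → ℝ) (G : Finset (Fin n)) (x : Fin R → ℕ) : Set ℝ :=
  {w | ∃ A : Fin n → Fin R → ℕ, ∑ i ∈ G, A i = x ∧ SW R V G A = w}

noncomputable def P (V : Fin n → (Fin R → ℕ) → ℝ) (G : Finset (Fin n))
    (x : Fin R → ℕ) : ℝ :=
  sSup (Pex V G x)

lemma Pex_finite (V : Fin n → (Fin R → ℕ) → ℝ) (G : Finset (Fin n)) (x : Fin R → ℕ) :
    (Pex V G x).Finite := by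
  have h : Pex V G x ⊆ (SW R V G) '' {A : Fin n → Fin R → ℕ | ∀ i, A i ≤ x} := by
    rintro w ⟨A, hsum, rfl⟩
    refine ⟨fun i => if i ∈ G then A i else 0, ?_, ?_⟩
    · intro i
      by_cases hi : i ∈ G
      · simp only [if_pos hi]
        calc A i ≤ ∑ k ∈ G, A k := Finset.single_le_sum (fun k _ => zero_le) hi
        _ = x := hsum
      · simp only [if_neg hi]
        exact zero_le
    · unfold SW
      exact Finset.sum_congr rfl (fun i hi => by simp only [if_pos hi])
  exact ((alloc_finite x).image _).subset h

lemma le_P {V : Fin n → (Fin R → ℕ) → ℝ} {G : Finset (Fin n)} {x : Fin R → ℕ} {w : ℝ}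
    (hw : w ∈ Pex V G x) : w ≤ P V G x :=
  le_csSup (Pex_finite V G x).bddAbove hw

lemma P_mem {V : Fin n → (Fin R → ℕ) → ℝ} {G : Finset (Fin n)} (h : G.Nonempty)
    (x : Fin R → ℕ) : P V G x ∈ Pex V G x := by
  have hne : (Pex V G x).Nonempty := by
    obtain ⟨i₀, hi₀⟩ := h
    refine ⟨_, fun i => if i = i₀ then x else 0, ?_, rfl⟩
    rw [Finset.sum_ite_eq' G i₀ (fun _ => x)]
    exact if_pos hi₀
  exact hne.csSup_mem (Pex_finite V G x)

lemma P_empty (V : Fin n → (Fin R → ℕ) → ℝ) (x : Fin R → ℕ) : P V ∅ x = 0 := by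
  unfold P
  by_cases hx : x = 0
  · have : Pex V ∅ x = {0} := by
      ext w
      simp [Pex, SW, hx, eq_comm]
    rw [this, csSup_singleton]
  · have : Pex V ∅ x = ∅ := by
      ext w
      simp only [Pex, SW, Finset.sum_empty, Set.mem_setOf_eq, Set.mem_empty_iff_false,
        iff_false, not_exists, not_and]
      intro A h
      exact absurd h.symm hx
    rw [this, Real.sSup_empty]

lemma P_achieve (V : Fin n → (Fin R → ℕ) → ℝ) (G : Finset (Fin n)) (x : Fin R → ℕ) :
    ∃ A : Fin n → Fin R → ℕ, (∑ i ∈ G, A i) ≤ x ∧ P V G x ≤ SW R V G A := by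
  rcases G.eq_empty_or_nonempty with rfl | h
  · exact ⟨0, by simp, by rw [P_empty]; simp [SW]⟩
  · obtain ⟨A, hs, hw⟩ := P_mem (V := V) h x
    exact ⟨A, hs.le, hw.ge⟩

lemma P_singleton (V : Fin n → (Fin R → ℕ) → ℝ) (i : Fin n) : P V {i} = V i := by
  funext x
  apply le_antisymm
  · refine csSup_le ⟨V i x, fun _ => x, by simp, by simp [SW]⟩ ?_
    rintro w ⟨A, hs, rfl⟩
    rw [Finset.sum_singleton] at hs
    simp [SW, hs]
  · exact le_P ⟨fun _ => x, by simp, by simp [SW]⟩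


lemma joinSet_finite (F B : (Fin R → ℕ) → ℝ) (a : Fin R → ℕ) :
    {w : ℝ | ∃ b ≤ a, F b + B (a - b) = w}.Finite := by
  have h : {w : ℝ | ∃ b ≤ a, F b + B (a - b) = w}
      ⊆ (fun b => F b + B (a - b)) '' {b | b ≤ a} := by
    rintro w ⟨b, hb, rfl⟩
    exact ⟨b, hb, rfl⟩
  exact ((le_finite a).image _).subset h

lemma le_join {F B : (Fin R → ℕ) → ℝ} {a b : Fin R → ℕ} (hb : b ≤ a) :
    F b + B (a - b) ≤ join R F B a :=
  le_csSup (joinSet_finite F B a).bddAbove ⟨b, hb, rfl⟩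

lemma join_le {F B : (Fin R → ℕ) → ℝ} {a : Fin R → ℕ} {c : ℝ}
    (h : ∀ b ≤ a, F b + B (a - b) ≤ c) : join R F B a ≤ c := by
  refine csSup_le ⟨F 0 + B (a - 0), 0, zero_le, rfl⟩ ?_
  rintro w ⟨b, hb, rfl⟩
  exact h b hb

lemma join_P (V : Fin n → (Fin R → ℕ) → ℝ) {G₁ G₂ : Finset (Fin n)}
    (h₁ : G₁.Nonempty) (h₂ : G₂.Nonempty) (hd : Disjoint G₁ G₂) (a : Fin R → ℕ) :
    join R (P V G₁) (P V G₂) a = P V (G₁ ∪ G₂) a := by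
  apply le_antisymm
  · apply join_le
    intro b hb
    obtain ⟨A₁, hs₁, hw₁⟩ := P_mem (V := V) h₁ b
    obtain ⟨A₂, hs₂, hw₂⟩ := P_mem (V := V) h₂ (a - b)
    set A : Fin n → Fin R → ℕ := fun i => if i ∈ G₁ then A₁ i else A₂ i with hA
    have e1 : ∑ i ∈ G₁, A i = b := by
      rw [← hs₁]
      exact Finset.sum_congr rfl (fun i hi => by simp [hA, hi])
    have e2 : ∑ i ∈ G₂, A i = a - b := by
      rw [← hs₂]
      refine Finset.sum_congr rfl (fun i hi => ?_)
      have : i ∉ G₁ := Finset.disjoint_right.mp hd hi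
      simp [hA, this]
    have w1 : SW R V G₁ A = P V G₁ b := by
      rw [← hw₁]
      exact Finset.sum_congr rfl (fun i hi => by simp [hA, hi])
    have w2 : SW R V G₂ A = P V G₂ (a - b) := by
      rw [← hw₂]
      refine Finset.sum_congr rfl (fun i hi => ?_)
      have : i ∉ G₁ := Finset.disjoint_right.mp hd hi
      simp [hA, this]
    apply le_P
    refine ⟨A, ?_, ?_⟩
    · rw [Finset.sum_union hd, e1, e2]
      funext k
      exact Nat.add_sub_cancel' (hb k)
    · show (∑ i ∈ G₁ ∪ G₂, V i (A i)) = _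
      rw [Finset.sum_union hd]
      show SW R V G₁ A + SW R V G₂ A = _
      rw [w1, w2]
  · have hU : (G₁ ∪ G₂).Nonempty := h₁.mono Finset.subset_union_left
    obtain ⟨A, hs, hw⟩ := P_mem (V := V) hU a
    rw [← hw]
    rw [Finset.sum_union hd] at hs
    set b := ∑ i ∈ G₁, A i with hbdef
    have hb : b ≤ a := hs ▸ le_self_add
    have hc : ∑ i ∈ G₂, A i = a - b := by
      funext k
      have := congrFun hs k
      simp only [Pi.add_apply, Pi.sub_apply] at this ⊢
      omega
    have k1 : SW R V G₁ A ≤ P V G₁ b := le_P ⟨A, rfl, rfl⟩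
    have k2 : SW R V G₂ A ≤ P V G₂ (a - b) := le_P ⟨A, hc, rfl⟩
    calc SW R V (G₁ ∪ G₂) A = SW R V G₁ A + SW R V G₂ A := Finset.sum_union hd
      _ ≤ P V G₁ b + P V G₂ (a - b) := add_le_add k1 k2
      _ ≤ join R (P V G₁) (P V G₂) a := le_join hb

lemma foldl_join (V : Fin n → (Fin R → ℕ) → ℝ) (l : List (Fin n)) :
    ∀ j : Fin n, (j :: l).Nodup →
      (l.map V).foldl (join R) (V j) = P V (insert j l.toFinset) := by
  induction l using List.reverseRecOn with
  | nil =>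
    intro j _
    simp [P_singleton]
  | append_singleton l i ih =>
    intro j hnd
    have hnd' : (j :: l).Nodup := by
      have := hnd.sublist (List.cons_sublist_cons.mpr (l.sublist_append_left [i]))
      exact this
    have hij : i ≠ j ∧ i ∉ l := by
      rcases List.nodup_cons.mp hnd with ⟨hj, hnd2⟩
      constructor
      · intro h; exact hj (h ▸ List.mem_append_right l (List.mem_singleton_self i))
      · intro h
        have := List.disjoint_of_nodup_append hnd2
        exact this h (List.mem_singleton_self i)
    rw [List.map_append, List.foldl_append, ih j hnd']
    simp only [List.map_cons, List.map_nil, List.foldl_cons, List.foldl_nil]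
    rw [← P_singleton V i]
    funext a
    rw [join_P V (Finset.insert_nonempty _ _) (Finset.singleton_nonempty _) ?_ a]
    · congr 1
      ext k
      simp [List.toFinset_append, or_comm, or_assoc, or_left_comm]
    · rw [Finset.disjoint_singleton_right]
      simp only [Finset.mem_insert, List.mem_toFinset]
      rintro (h | h)
      · exact hij.1 h
      · exact hij.2 h

lemma joinIter_map (V : Fin n → (Fin R → ℕ) → ℝ) (l : List (Fin n)) (hl : l.Nodup) :
    joinIter R (l.map V) = P V l.toFinset := by
  cases l with
  | nil =>
    funext a
    simp [joinIter, P_empty]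
  | cons j l =>
    show (l.map V).foldl (join R) (V j) = _
    rw [foldl_join V l j hl, List.toFinset_cons]

lemma OPTset_finite (V : Fin n → (Fin R → ℕ) → ℝ) (G : Finset (Fin n)) (m : Fin R → ℕ) :
    {w : ℝ | ∃ A : Fin n → Fin R → ℕ, Valid R G m A ∧ SW R V G A = w}.Finite := by
  have h : {w : ℝ | ∃ A, Valid R G m A ∧ SW R V G A = w}
      ⊆ (SW R V G) '' {A : Fin n → Fin R → ℕ | ∀ i, A i ≤ m} := by
    rintro w ⟨A, hval, rfl⟩
    refine ⟨fun i => if i ∈ G then A i else 0, ?_, ?_⟩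
    · intro i
      by_cases hi : i ∈ G
      · simp only [if_pos hi]
        calc A i ≤ ∑ k ∈ G, A k := Finset.single_le_sum (fun k _ => zero_le) hi
        _ ≤ m := hval
      · simp only [if_neg hi]
        exact zero_le
    · exact Finset.sum_congr rfl (fun i hi => by simp only [if_pos hi])
  exact ((alloc_finite m).image _).subset h

lemma top (V : Fin n → (Fin R → ℕ) → ℝ) {G₁ G₂ : Finset (Fin n)}
    (hd : Disjoint G₁ G₂) (m : Fin R → ℕ) :
    sSup {w : ℝ | ∃ a ≤ m, join R (P V G₁) (P V G₂) a = w} = OPT R V (G₁ ∪ G₂) m := by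
  have hLfin : {w : ℝ | ∃ a ≤ m, join R (P V G₁) (P V G₂) a = w}.Finite := by
    have h : {w : ℝ | ∃ a ≤ m, join R (P V G₁) (P V G₂) a = w}
        ⊆ (join R (P V G₁) (P V G₂)) '' {a | a ≤ m} := by
      rintro w ⟨a, ha, rfl⟩; exact ⟨a, ha, rfl⟩
    exact ((le_finite m).image _).subset h
  apply le_antisymm
  · refine csSup_le ⟨_, 0, zero_le, rfl⟩ ?_
    rintro w ⟨a, ha, rfl⟩
    apply join_le
    intro b hb
    obtain ⟨A₁, hs₁, hw₁⟩ := P_achieve V G₁ b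
    obtain ⟨A₂, hs₂, hw₂⟩ := P_achieve V G₂ (a - b)
    set A : Fin n → Fin R → ℕ := fun i => if i ∈ G₁ then A₁ i else A₂ i with hA
    have e1 : ∑ i ∈ G₁, A i = ∑ i ∈ G₁, A₁ i :=
      Finset.sum_congr rfl (fun i hi => by simp [hA, hi])
    have e2 : ∑ i ∈ G₂, A i = ∑ i ∈ G₂, A₂ i := by
      refine Finset.sum_congr rfl (fun i hi => ?_)
      have : i ∉ G₁ := Finset.disjoint_right.mp hd hi
      simp [hA, this]
    have w1 : SW R V G₁ A = SW R V G₁ A₁ :=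
      Finset.sum_congr rfl (fun i hi => by simp [hA, hi])
    have w2 : SW R V G₂ A = SW R V G₂ A₂ := by
      refine Finset.sum_congr rfl (fun i hi => ?_)
      have : i ∉ G₁ := Finset.disjoint_right.mp hd hi
      simp [hA, this]
    have hval : Valid R (G₁ ∪ G₂) m A := by
      show ∑ i ∈ G₁ ∪ G₂, A i ≤ m
      rw [Finset.sum_union hd, e1, e2]
      refine le_trans (add_le_add hs₁ hs₂) (le_trans ?_ ha)
      intro k
      have := hb k
      simp only [Pi.add_apply, Pi.sub_apply] at this ⊢
      omega
    calc P V G₁ b + P V G₂ (a - b) ≤ SW R V G₁ A₁ + SW R V G₂ A₂ := add_le_add hw₁ hw₂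
      _ = SW R V (G₁ ∪ G₂) A := by rw [← w1, ← w2]; exact (Finset.sum_union hd).symm
      _ ≤ OPT R V (G₁ ∪ G₂) m :=
        le_csSup (OPTset_finite V _ m).bddAbove ⟨A, hval, rfl⟩
  · refine csSup_le ⟨_, 0, by simp [Valid, zero_le], rfl⟩ ?_
    rintro w ⟨A, hval, rfl⟩
    have hval' : ∑ i ∈ G₁, A i + ∑ i ∈ G₂, A i ≤ m := by
      rw [← Finset.sum_union hd]; exact hval
    set b := ∑ i ∈ G₁, A i
    set c := ∑ i ∈ G₂, A i
    have hsub : (b + c) - b = c := by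
      funext k
      simp only [Pi.add_apply, Pi.sub_apply]
      omega
    have k1 : SW R V G₁ A ≤ P V G₁ b := le_P ⟨A, rfl, rfl⟩
    have k2 : SW R V G₂ A ≤ P V G₂ ((b + c) - b) := le_P ⟨A, hsub.symm, rfl⟩
    calc SW R V (G₁ ∪ G₂) A = SW R V G₁ A + SW R V G₂ A := Finset.sum_union hd
      _ ≤ P V G₁ b + P V G₂ ((b + c) - b) := add_le_add k1 k2
      _ ≤ join R (P V G₁) (P V G₂) (b + c) := le_join le_self_add
      _ ≤ sSup {w : ℝ | ∃ a ≤ m, join R (P V G₁) (P V G₂) a = w} :=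
        le_csSup hLfin.bddAbove ⟨b + c, hval', rfl⟩

end PSP

namespace PSP

lemma mem_take_finRange {n : ℕ} (j : ℕ) (i : Fin n) :
    i ∈ (List.finRange n).take j ↔ (i : ℕ) < j := by
  rw [List.mem_iff_getElem]
  constructor
  · rintro ⟨k, hk, rfl⟩
    have hk' : k < j := lt_of_lt_of_le hk (by simp [List.length_take])
    simpa using hk'
  · intro h
    refine ⟨(i : ℕ), ?_, ?_⟩
    · have := i.isLt
      simp only [List.length_take, List.length_finRange, lt_min_iff]
      omega
    · simp

lemma mem_drop_finRange {n : ℕ} (j : ℕ) (i : Fin n) :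
    i ∈ (List.finRange n).drop j ↔ j ≤ (i : ℕ) := by
  rw [List.mem_iff_getElem]
  constructor
  · rintro ⟨k, hk, rfl⟩
    simp [List.getElem_drop]
  · intro h
    refine ⟨(i : ℕ) - j, ?_, ?_⟩
    · simp [List.length_drop]
      omega
    · simp [List.getElem_drop]
      ext
      simp
      omega

end PSP


/-- Correctness of the prefix–suffix payment computation: joining the prefix
join `F = V₁ ⊕ ⋯ ⊕ V_{j-1}` with the suffix join `B = V_{j+1} ⊕ ⋯ ⊕ Vₙ` and
maximizing over allocation vectors bounded by `m` yields the maximal social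
welfare achievable when agent `j` is excluded. -/
theorem prefix_suffix_payment (R n : ℕ) (V : Fin n → (Fin R → ℕ) → ℝ)
    (m : Fin R → ℕ) (j : Fin n) :
    sSup {w : ℝ | ∃ a ≤ m,
        join R (joinIter R ((List.ofFn V).take (j : ℕ)))
               (joinIter R ((List.ofFn V).drop ((j : ℕ) + 1))) a = w} =
      OPT R V ((Finset.univ : Finset (Fin n)).erase j) m := by

  have ht : (List.ofFn V).take (j : ℕ)
      = List.map V ((List.finRange n).take (j : ℕ)) := by
    rw [List.ofFn_eq_map, List.map_take]
  have hdp : (List.ofFn V).drop ((j : ℕ) + 1)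
      = List.map V ((List.finRange n).drop ((j : ℕ) + 1)) := by
    rw [List.ofFn_eq_map, List.map_drop]
  have nd1 : ((List.finRange n).take (j : ℕ)).Nodup :=
    (List.take_sublist _ _).nodup (List.nodup_finRange n)
  have nd2 : ((List.finRange n).drop ((j : ℕ) + 1)).Nodup :=
    (List.drop_sublist _ _).nodup (List.nodup_finRange n)
  rw [ht, hdp, PSP.joinIter_map V _ nd1, PSP.joinIter_map V _ nd2]
  have hd : Disjoint ((List.finRange n).take (j : ℕ)).toFinset
      ((List.finRange n).drop ((j : ℕ) + 1)).toFinset := by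
    rw [Finset.disjoint_left]
    intro i h1 h2
    rw [List.mem_toFinset, PSP.mem_take_finRange] at h1
    rw [List.mem_toFinset, PSP.mem_drop_finRange] at h2
    omega
  rw [PSP.top V hd m]
  congr 1
  ext i
  simp only [Finset.mem_union, List.mem_toFinset, PSP.mem_take_finRange,
    PSP.mem_drop_finRange, Finset.mem_erase, Finset.mem_univ, and_true]
  rw [Fin.ne_iff_vne]
  omega
end
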